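/- In a coupon collector sequence over d kinds that terminates successfully at step n, the probability of terminating at step n with exactly j singletons (coupons drawn exactly once) is f(n,j) = (d!/d^n) · C(n-1, j-1) · S_{≥2}(n-j, d-j), where S_{≥2}(m,k) counts partitions of an m-set into k blocks each of size at least 2. -/

import Mathlib

open Finset

section KerPart
variable {α γ : Type*} [Fintype α] [DecidableEq α] [DecidableEq γ]

def kerSetoid (g : α → γ) : Setoid α :=
  ⟨fun a b => g a = g b, ⟨fun _ => rfl, Eq.symm, Eq.trans⟩⟩

instance (g : α → γ) : DecidableRel (kerSetoid g).r := fun _ _ => decEq _ _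

def kerPart (g : α → γ) : Finpartition (univ : Finset α) :=
  Finpartition.ofSetoid (kerSetoid g)

lemma mem_part_kerPart (g : α → γ) (a b : α) :
    b ∈ (kerPart g).part a ↔ g a = g b :=
  Finpartition.mem_part_ofSetoid_iff_rel

lemma part_eq_part_iff_aux (P : Finpartition (univ : Finset α)) (a b : α) :
    P.part a = P.part b ↔ a ∈ P.part b :=
  (P.mem_part_iff_part_eq_part (mem_univ a) (mem_univ b)).symm

lemma kerPart_part_eq_part_iff (g : α → γ) (a b : α) :
    (kerPart g).part a = (kerPart g).part b ↔ g a = g b := by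
  rw [part_eq_part_iff_aux, mem_part_kerPart, eq_comm]

lemma parts_eq_image_part (P : Finpartition (univ : Finset α)) :
    P.parts = univ.image P.part := by
  ext p
  constructor
  · intro hp
    obtain ⟨x, hx⟩ := P.nonempty_of_mem_parts hp
    exact mem_image.2 ⟨x, mem_univ x, P.part_eq_of_mem hp hx⟩
  · rintro hp
    obtain ⟨x, -, rfl⟩ := mem_image.1 hp
    exact P.part_mem.2 (mem_univ x)

lemma finpartition_eq_of_part_eq {P Q : Finpartition (univ : Finset α)}
    (h : ∀ a, P.part a = Q.part a) : P = Q := by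
  ext1
  rw [parts_eq_image_part P, parts_eq_image_part Q]
  exact Finset.image_congr fun a _ => h a

lemma part_eq_singleton_iff (P : Finpartition (univ : Finset α)) (a : α) :
    (P.part a).card = 1 ↔ P.part a = {a} := by
  constructor
  · intro h
    obtain ⟨x, hx⟩ := card_eq_one.1 h
    have := P.mem_part (mem_univ a)
    rw [hx] at this ⊢
    rw [mem_singleton] at this
    rw [this]
  · intro h; rw [h]; simp

lemma singleton_mem_parts_iff (P : Finpartition (univ : Finset α)) (a : α) :
    {a} ∈ P.parts ↔ (P.part a).card = 1 := by
  rw [part_eq_singleton_iff]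
  constructor
  · intro h
    exact P.part_eq_of_mem h (mem_singleton_self a)
  · intro h; rw [← h]; exact P.part_mem.2 (mem_univ a)

instance finpartitionFinite : Finite (Finpartition (univ : Finset α)) := by
  apply Finite.of_injective (fun P => P.parts)
  intro P Q h
  exact Finpartition.ext h

lemma part_kerPart (g : α → γ) (a : α) :
    (kerPart g).part a = univ.filter (fun b => g b = g a) := by
  ext b; simp [mem_part_kerPart, eq_comm]

lemma parts_kerPart (g : α → γ) :
    (kerPart g).parts = (univ.image g).image (fun c => univ.filter (fun b => g b = c)) := by
  rw [parts_eq_image_part, Finset.image_image]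
  exact Finset.image_congr fun a _ => part_kerPart g a

lemma card_parts_kerPart (g : α → γ) :
    (kerPart g).parts.card = (univ.image g).card := by
  rw [parts_kerPart]
  apply card_image_of_injOn
  intro c hc c' hc' h
  have h' : univ.filter (fun b => g b = c) = univ.filter (fun b => g b = c') := h
  simp only [Finset.mem_coe] at hc hc'
  obtain ⟨a, -, rfl⟩ := mem_image.1 hc
  have ha : a ∈ univ.filter (fun b => g b = g a) := by simp
  rw [h'] at ha
  exact (mem_filter.1 ha).2

variable [Fintype γ]

lemma card_parts_kerPart_eq_iff (g : α → γ) :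
    (kerPart g).parts.card = Fintype.card γ ↔ Function.Surjective g := by
  rw [card_parts_kerPart]
  constructor
  · intro h c
    have h2 : (univ.image g) = univ := Finset.eq_univ_of_card _ (by simpa using h)
    have hc : c ∈ univ.image g := by rw [h2]; exact mem_univ c
    simpa using mem_image.1 hc
  · intro h
    have h2 : (univ.image g) = univ := by
      ext c; simpa using h c
    simp [h2]

lemma card_singleton_kinds (g : α → γ) :
    (univ.filter fun c => (univ.filter fun a => g a = c).card = 1).card
      = ((kerPart g).parts.filter fun p => p.card = 1).card := by
  apply Finset.card_nbij (i := fun c => univ.filter (fun b => g b = c))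
  · intro c hc
    simp only [mem_coe] at hc ⊢
    rw [mem_filter] at hc
    obtain ⟨x, hx⟩ := card_eq_one.1 hc.2
    have hgx : g x = c := by
      have : x ∈ univ.filter (fun a => g a = c) := hx ▸ mem_singleton_self x
      exact (mem_filter.1 this).2
    rw [mem_filter]
    refine ⟨?_, hc.2⟩
    have : univ.filter (fun b => g b = c) = (kerPart g).part x := by
      rw [part_kerPart, hgx]
    rw [this]
    exact (kerPart g).part_mem.2 (mem_univ x)
  · intro c hc c' hc' h
    have h' : univ.filter (fun b => g b = c) = univ.filter (fun b => g b = c') := h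
    simp only [coe_filter, Set.mem_setOf_eq] at hc hc'
    obtain ⟨x, hx⟩ := card_eq_one.1 hc.2
    have hgx : x ∈ univ.filter (fun a => g a = c) := hx ▸ mem_singleton_self x
    have hgx' : x ∈ univ.filter (fun a => g a = c') := by rw [← h']; exact hgx
    rw [mem_filter] at hgx hgx'
    rw [← hgx.2, ← hgx'.2]
  · intro p hp
    simp only [coe_filter, Set.mem_setOf_eq, mem_coe] at hp ⊢
    obtain ⟨hp1, hp2⟩ := hp
    obtain ⟨x, hx⟩ := (kerPart g).nonempty_of_mem_parts hp1
    have hpart : univ.filter (fun a => g a = g x) = p :=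
      (part_kerPart g x).symm.trans ((kerPart g).part_eq_of_mem hp1 hx)
    exact ⟨g x, ⟨mem_univ _, by rw [hpart]; exact hp2⟩, hpart⟩

/-- Functions with a given fiber partition correspond to labelings of the parts. -/
noncomputable def labelEquiv (P : Finpartition (univ : Finset α))
    (hP : P.parts.card = Fintype.card γ) :
    {f : α → γ // kerPart f = P} ≃ ({p // p ∈ P.parts} ≃ γ) where
  toFun f :=
    Equiv.ofBijective (fun p => f.1 (P.nonempty_of_mem_parts p.2).choose)
      (by
        rw [Fintype.bijective_iff_injective_and_card]
        refine ⟨?_, by simp [Fintype.card_coe, hP]⟩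
        intro p q h
        have hp := (P.nonempty_of_mem_parts p.2).choose_spec
        have hq := (P.nonempty_of_mem_parts q.2).choose_spec
        have h2 := (kerPart_part_eq_part_iff f.1 _ _).2 h
        rw [f.2] at h2
        rw [P.part_eq_of_mem p.2 hp, P.part_eq_of_mem q.2 hq] at h2
        exact Subtype.ext h2)
  invFun σ :=
    ⟨fun a => σ ⟨P.part a, P.part_mem.2 (mem_univ a)⟩, by
      apply finpartition_eq_of_part_eq
      intro a
      ext b
      rw [mem_part_kerPart]
      constructor
      · intro h
        have h2 : P.part a = P.part b := congrArg Subtype.val (σ.injective h)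
        rw [h2]
        exact P.mem_part (mem_univ b)
      · intro h
        have h2 : P.part b = P.part a :=
          P.part_eq_of_mem (P.part_mem.2 (mem_univ a)) h
        congr 1
        exact Subtype.ext h2.symm⟩
  left_inv := by
    rintro ⟨f, hf⟩
    apply Subtype.ext
    funext a
    simp only [Equiv.ofBijective_apply]
    have hmem : (P.nonempty_of_mem_parts (P.part_mem.2 (mem_univ a))).choose ∈ P.part a :=
      (P.nonempty_of_mem_parts (P.part_mem.2 (mem_univ a))).choose_spec
    have h3 : (P.nonempty_of_mem_parts (P.part_mem.2 (mem_univ a))).choose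
        ∈ (kerPart f).part a := by rw [hf]; exact hmem
    exact ((mem_part_kerPart f a _).1 h3).symm
  right_inv := by
    intro σ
    apply Equiv.ext
    intro p
    simp only [Equiv.ofBijective_apply]
    congr 1
    apply Subtype.ext
    exact P.part_eq_of_mem p.2 (P.nonempty_of_mem_parts p.2).choose_spec

end KerPart

lemma orderIsoOfFin_congr {α : Type*} [LinearOrder α] {s t : Finset α} (hst : s = t) {k : ℕ}
    (hs : s.card = k) (ht : t.card = k) (x : Fin k) :
    (s.orderIsoOfFin hs x : α) = t.orderIsoOfFin ht x := by subst hst; rfl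

section Main

variable (n m : ℕ)

def emb (hn : 1 ≤ n) : Fin (n - 1) → Fin n := fun a => ⟨a.1, by omega⟩

lemma emb_injective (hn : 1 ≤ n) : Function.Injective (emb n hn) := by
  intro a b h
  have h2 : (emb n hn a).val = (emb n hn b).val := congrArg Fin.val h
  exact Fin.ext h2

def lastF (hn : 1 ≤ n) : Fin n := ⟨n - 1, by omega⟩

def spSet (hn : 1 ≤ n) (A : Finset (Fin (n - 1))) : Finset (Fin n) :=
  insert (lastF n hn) (A.image (emb n hn))

lemma lastF_not_mem_image (hn : 1 ≤ n) (A : Finset (Fin (n - 1))) :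
    lastF n hn ∉ A.image (emb n hn) := by
  intro hmem
  obtain ⟨a, -, ha⟩ := mem_image.1 hmem
  have h2 : (emb n hn a).val = (lastF n hn).val := congrArg Fin.val ha
  have h3 := a.isLt
  simp only [emb, lastF] at h2
  omega

lemma card_spSet (hn : 1 ≤ n) (A : Finset (Fin (n - 1))) :
    (spSet n hn A).card = A.card + 1 := by
  rw [spSet, card_insert_of_notMem (lastF_not_mem_image n hn A),
    card_image_of_injective _ (emb_injective n hn)]

def Uc (hn : 1 ≤ n) (A : Finset (Fin (n - 1))) : Finset (Fin n) :=
  univ \ spSet n hn A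

lemma card_Uc (hn : 1 ≤ n) (A : Finset (Fin (n - 1))) :
    (Uc n hn A).card = n - (A.card + 1) := by
  rw [Uc, card_sdiff_of_subset (subset_univ _), card_univ, Fintype.card_fin, card_spSet]

variable {n m}

/-- the reconstruction function whose kernel partition is `Pback` -/
def po (hn : 1 ≤ n) (A : Finset (Fin (n - 1))) (h : (Uc n hn A).card = m)
    (Q : Finpartition (univ : Finset (Fin m))) : Fin n → (Finset (Fin m) ⊕ Fin n) :=
  fun i =>
    if hi : i ∈ Uc n hn A then
      Sum.inl (Q.part (((Uc n hn A).orderIsoOfFin h).symm ⟨i, hi⟩))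
    else Sum.inr i

def Pback (hn : 1 ≤ n) (A : Finset (Fin (n - 1))) (h : (Uc n hn A).card = m)
    (Q : Finpartition (univ : Finset (Fin m))) : Finpartition (univ : Finset (Fin n)) :=
  kerPart (po hn A h Q)

variable (hn : 1 ≤ n) (A : Finset (Fin (n - 1))) (h : (Uc n hn A).card = m)
  (Q : Finpartition (univ : Finset (Fin m)))

lemma Pback_part_of_not_mem {i : Fin n} (hi : i ∉ Uc n hn A) :
    (Pback hn A h Q).part i = {i} := by
  rw [Pback, part_kerPart]
  ext b
  simp only [mem_filter, mem_univ, true_and, mem_singleton]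
  rw [po, po, dif_neg hi]
  constructor
  · intro hb
    by_cases hbU : b ∈ Uc n hn A
    · rw [dif_pos hbU] at hb; exact absurd hb (by simp)
    · rw [dif_neg hbU] at hb; exact Sum.inr.inj hb
  · rintro rfl; rw [dif_neg hi]

lemma Pback_part_of_mem {i : Fin n} (hi : i ∈ Uc n hn A) :
    (Pback hn A h Q).part i =
      (Q.part (((Uc n hn A).orderIsoOfFin h).symm ⟨i, hi⟩)).image
        (fun b => ((Uc n hn A).orderIsoOfFin h b : Fin n)) := by
  rw [Pback, part_kerPart]
  ext b
  simp only [mem_filter, mem_univ, true_and, mem_image]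
  rw [po, po, dif_pos hi]
  constructor
  · intro hb
    by_cases hbU : b ∈ Uc n hn A
    · rw [dif_pos hbU] at hb
      replace hb := Sum.inl.inj hb
      refine ⟨((Uc n hn A).orderIsoOfFin h).symm ⟨b, hbU⟩, ?_, ?_⟩
      · rw [← part_eq_part_iff_aux, hb]
      · simp
    · rw [dif_neg hbU] at hb; exact absurd hb (by simp)
  · rintro ⟨x, hx, rfl⟩
    have hxU : ((Uc n hn A).orderIsoOfFin h x : Fin n) ∈ Uc n hn A :=
      ((Uc n hn A).orderIsoOfFin h x).2
    rw [dif_pos hxU]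
    congr 1
    have : (((Uc n hn A).orderIsoOfFin h).symm
        ⟨((Uc n hn A).orderIsoOfFin h x : Fin n), hxU⟩) = x := by
      rw [show (⟨((Uc n hn A).orderIsoOfFin h x : Fin n), hxU⟩ :
          {y // y ∈ Uc n hn A}) = (Uc n hn A).orderIsoOfFin h x from rfl]
      exact OrderIso.symm_apply_apply _ _
    rw [this]
    exact (part_eq_part_iff_aux Q _ _).2 hx

lemma isoU_symm_apply (y : Fin m)
    (hy : ((Uc n hn A).orderIsoOfFin h y : Fin n) ∈ Uc n hn A) :
    ((Uc n hn A).orderIsoOfFin h).symm ⟨((Uc n hn A).orderIsoOfFin h y : Fin n), hy⟩ = y := by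
  rw [show (⟨((Uc n hn A).orderIsoOfFin h y : Fin n), hy⟩ : {x // x ∈ Uc n hn A})
      = (Uc n hn A).orderIsoOfFin h y from rfl]
  exact OrderIso.symm_apply_apply _ _

lemma coe_isoU_injective :
    Function.Injective (fun b : Fin m => ((Uc n hn A).orderIsoOfFin h b : Fin n)) :=
  fun _ _ hb => ((Uc n hn A).orderIsoOfFin h).injective (Subtype.coe_injective hb)

lemma card_Pback_part_of_mem {i : Fin n} (hi : i ∈ Uc n hn A) :
    ((Pback hn A h Q).part i).card =
      (Q.part (((Uc n hn A).orderIsoOfFin h).symm ⟨i, hi⟩)).card := by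
  rw [Pback_part_of_mem hn A h Q hi]
  exact card_image_of_injective _ (coe_isoU_injective hn A h)

lemma mem_Uc_iff_not_mem_spSet (i : Fin n) :
    i ∈ Uc n hn A ↔ i ∉ spSet n hn A := by
  simp [Uc]

lemma emb_mem_Uc_iff (a : Fin (n - 1)) :
    emb n hn a ∈ Uc n hn A ↔ a ∉ A := by
  rw [mem_Uc_iff_not_mem_spSet, spSet, mem_insert, not_or, mem_image]
  constructor
  · rintro ⟨-, h2⟩ ha
    exact h2 ⟨a, ha, rfl⟩
  · intro ha
    refine ⟨?_, ?_⟩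
    · intro hcon
      have h2 : (emb n hn a).val = (lastF n hn).val := congrArg Fin.val hcon
      have h3 := a.isLt
      simp only [emb, lastF] at h2
      omega
    · rintro ⟨b, hb, hba⟩
      exact ha (emb_injective n hn hba ▸ hb)

lemma two_le_card_Pback_part (hQ2 : ∀ p ∈ Q.parts, 2 ≤ p.card) {i : Fin n} (hi : i ∈ Uc n hn A) :
    2 ≤ ((Pback hn A h Q).part i).card := by
  rw [card_Pback_part_of_mem hn A h Q hi]
  exact hQ2 _ (Q.part_mem.2 (mem_univ _))

lemma Pback_parts_filter_singleton (hQ2 : ∀ p ∈ Q.parts, 2 ≤ p.card) :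
    (Pback hn A h Q).parts.filter (fun p => p.card = 1)
      = (spSet n hn A).image (fun x => ({x} : Finset (Fin n))) := by
  ext p
  rw [mem_filter, mem_image]
  constructor
  · rintro ⟨hp, hc⟩
    obtain ⟨x, rfl⟩ := card_eq_one.1 hc
    have hpart : (Pback hn A h Q).part x = {x} :=
      (Pback hn A h Q).part_eq_of_mem hp (mem_singleton_self x)
    by_cases hx : x ∈ Uc n hn A
    · exfalso
      have := two_le_card_Pback_part hn A h Q hQ2 hx
      rw [hpart] at this
      simp at this
    · exact ⟨x, (mem_Uc_iff_not_mem_spSet hn A x).not_left.1 (by simpa using hx), rfl⟩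
  · rintro ⟨x, hx, rfl⟩
    have hxU : x ∉ Uc n hn A := by
      rw [mem_Uc_iff_not_mem_spSet]; simp [hx]
    have hpart := Pback_part_of_not_mem hn A h Q hxU
    exact ⟨hpart ▸ (Pback hn A h Q).part_mem.2 (mem_univ x), by simp⟩

lemma Pback_parts_filter_not_singleton (hQ2 : ∀ p ∈ Q.parts, 2 ≤ p.card) :
    (Pback hn A h Q).parts.filter (fun p => ¬ p.card = 1)
      = Q.parts.image
          (fun q => q.image (fun b => ((Uc n hn A).orderIsoOfFin h b : Fin n))) := by
  ext p
  rw [mem_filter, mem_image]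
  constructor
  · rintro ⟨hp, hc⟩
    obtain ⟨x, hx⟩ := (Pback hn A h Q).nonempty_of_mem_parts hp
    have hpart : (Pback hn A h Q).part x = p :=
      (Pback hn A h Q).part_eq_of_mem hp hx
    by_cases hxU : x ∈ Uc n hn A
    · refine ⟨Q.part (((Uc n hn A).orderIsoOfFin h).symm ⟨x, hxU⟩),
        Q.part_mem.2 (mem_univ _), ?_⟩
      rw [← Pback_part_of_mem hn A h Q hxU, hpart]
    · exfalso
      apply hc
      rw [← hpart, Pback_part_of_not_mem hn A h Q hxU]
      simp
  · rintro ⟨q, hq, rfl⟩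
    obtain ⟨y, hy⟩ := Q.nonempty_of_mem_parts hq
    have hyU : ((Uc n hn A).orderIsoOfFin h y : Fin n) ∈ Uc n hn A :=
      ((Uc n hn A).orderIsoOfFin h y).2
    have hpart := Pback_part_of_mem hn A h Q hyU
    rw [isoU_symm_apply hn A h] at hpart
    rw [Q.part_eq_of_mem hq hy] at hpart
    refine ⟨hpart ▸ (Pback hn A h Q).part_mem.2 (mem_univ _), ?_⟩
    rw [card_image_of_injective _ (coe_isoU_injective hn A h)]
    have := hQ2 q hq
    omega

lemma card_Pback_parts_filter_singleton (hQ2 : ∀ p ∈ Q.parts, 2 ≤ p.card) :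
    ((Pback hn A h Q).parts.filter (fun p => p.card = 1)).card = A.card + 1 := by
  rw [Pback_parts_filter_singleton hn A h Q hQ2,
    card_image_of_injective _ Finset.singleton_injective, card_spSet]

lemma card_Pback_parts (hQ2 : ∀ p ∈ Q.parts, 2 ≤ p.card) :
    (Pback hn A h Q).parts.card = (A.card + 1) + Q.parts.card := by
  rw [← card_filter_add_card_filter_not (p := fun p => p.card = 1),
    card_Pback_parts_filter_singleton hn A h Q hQ2,
    Pback_parts_filter_not_singleton hn A h Q hQ2,
    card_image_of_injective _ (Finset.image_injective (coe_isoU_injective hn A h))]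

lemma lastF_mem_Pback_parts : ({lastF n hn} : Finset (Fin n)) ∈ (Pback hn A h Q).parts := by
  have hl : lastF n hn ∉ Uc n hn A := by
    rw [mem_Uc_iff_not_mem_spSet]
    simp [spSet]
  have := Pback_part_of_not_mem hn A h Q hl
  exact this ▸ (Pback hn A h Q).part_mem.2 (mem_univ _)

lemma AP_Pback (hQ2 : ∀ p ∈ Q.parts, 2 ≤ p.card) :
    (univ.filter (fun a : Fin (n-1) => ({emb n hn a} : Finset (Fin n))
    ∈ (Pback hn A h Q).parts)) = A := by
  ext a
  rw [mem_filter, singleton_mem_parts_iff]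
  simp only [mem_univ, true_and]
  by_cases ha : a ∈ A
  · have hU : emb n hn a ∉ Uc n hn A := fun hc => ((emb_mem_Uc_iff hn A a).1 hc) ha
    rw [Pback_part_of_not_mem hn A h Q hU]
    simp [ha]
  · have hU : emb n hn a ∈ Uc n hn A := (emb_mem_Uc_iff hn A a).2 ha
    have := two_le_card_Pback_part hn A h Q hQ2 hU
    constructor
    · intro hc; omega
    · intro hc; exact absurd hc ha

lemma UP_Pback (hQ2 : ∀ p ∈ Q.parts, 2 ≤ p.card) : (univ.filter (fun i : Fin n => ((Pback hn A h Q).part i).card ≠ 1))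
    = Uc n hn A := by
  ext i
  rw [mem_filter]
  simp only [mem_univ, true_and]
  by_cases hi : i ∈ Uc n hn A
  · have := two_le_card_Pback_part hn A h Q hQ2 hi
    constructor
    · intro _; exact hi
    · intro _; omega
  · rw [Pback_part_of_not_mem hn A h Q hi]
    simp [hi]

lemma coe_orderIsoOfFin_injective {β : Type*} [LinearOrder β] (s : Finset β) {k : ℕ}
    (hs : s.card = k) : Function.Injective (fun b : Fin k => (s.orderIsoOfFin hs b : β)) :=
  fun _ _ hb => (s.orderIsoOfFin hs).injective (Subtype.coe_injective hb)

section Forward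

variable (P : Finpartition (univ : Finset (Fin n)))

def UP : Finset (Fin n) := univ.filter (fun i => (P.part i).card ≠ 1)

def AP (hn : 1 ≤ n) : Finset (Fin (n - 1)) :=
  univ.filter (fun a => ({emb n hn a} : Finset (Fin n)) ∈ P.parts)

lemma card_filter_part_card_one :
    (univ.filter (fun i => (P.part i).card = 1)).card
      = (P.parts.filter fun p => p.card = 1).card := by
  apply card_nbij (i := fun i => P.part i)
  · intro i hi
    simp only [mem_coe] at hi ⊢
    rw [mem_filter] at hi
    rw [mem_filter]
    exact ⟨P.part_mem.2 (mem_univ i), hi.2⟩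
  · intro i hi i' hi' hii
    have hii' : P.part i = P.part i' := hii
    simp only [coe_filter, Set.mem_setOf_eq] at hi hi'
    have h1 := (part_eq_singleton_iff P i).1 hi.2
    have h2 := (part_eq_singleton_iff P i').1 hi'.2
    rw [h1, h2] at hii'
    exact singleton_injective hii'
  · intro p hp
    simp only [coe_filter, Set.mem_setOf_eq, mem_coe] at hp ⊢
    obtain ⟨hp1, hp2⟩ := hp
    obtain ⟨x, rfl⟩ := card_eq_one.1 hp2
    have hx : P.part x = {x} := P.part_eq_of_mem hp1 (mem_singleton_self x)
    exact ⟨x, ⟨mem_univ x, by rw [hx]; simp⟩, hx⟩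

lemma card_UP : (UP P).card = n - (P.parts.filter fun p => p.card = 1).card := by
  have h1 := card_filter_add_card_filter_not (s := (univ : Finset (Fin n)))
    (p := fun i => (P.part i).card = 1)
  rw [card_filter_part_card_one] at h1
  rw [card_univ, Fintype.card_fin] at h1
  have h2 : (UP P).card = (univ.filter (fun i => ¬ (P.part i).card = 1)).card := rfl
  omega

lemma card_AP (hn : 1 ≤ n) (hPL : ({lastF n hn} : Finset (Fin n)) ∈ P.parts) :
    (AP P hn).card + 1 = (P.parts.filter fun p => p.card = 1).card := by
  have hLmem : ({lastF n hn} : Finset (Fin n)) ∈ P.parts.filter fun p => p.card = 1 := by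
    rw [mem_filter]; exact ⟨hPL, by simp⟩
  rw [← card_erase_add_one hLmem]
  congr 1
  apply card_nbij (i := fun a => ({emb n hn a} : Finset (Fin n)))
  · intro a ha
    simp only [mem_coe] at ha ⊢
    rw [AP, mem_filter] at ha
    rw [mem_erase, mem_filter]
    refine ⟨?_, ha.2, by simp⟩
    intro hc
    have h2 : (emb n hn a).val = (lastF n hn).val :=
      congrArg Fin.val (singleton_injective hc)
    have h3 := a.isLt
    simp only [emb, lastF] at h2
    omega
  · intro a _ a' _ haa
    exact emb_injective n hn (singleton_injective haa)
  · intro p hp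
    simp only [mem_coe, mem_erase, mem_filter] at hp
    obtain ⟨hne, hp1, hp2⟩ := hp
    obtain ⟨x, rfl⟩ := card_eq_one.1 hp2
    have hxL : x ≠ lastF n hn := fun hc => hne (by rw [hc])
    have hxval : x.val < n - 1 := by
      have h1 := x.isLt
      have h2 : x.val ≠ n - 1 := fun hc => hxL (Fin.ext hc)
      omega
    refine ⟨⟨x.val, hxval⟩, ?_, ?_⟩
    · simp only [coe_filter, Set.mem_setOf_eq, AP]
      refine ⟨mem_univ _, ?_⟩
      have hxe : emb n hn ⟨x.val, hxval⟩ = x := Fin.ext rfl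
      rw [hxe]
      exact hp1
    · have hxe : emb n hn ⟨x.val, hxval⟩ = x := Fin.ext rfl
      simp only
      rw [hxe]

variable {P}

def QP (hU : (UP P).card = m) : Finpartition (univ : Finset (Fin m)) :=
  kerPart (fun x : Fin m => P.part (((UP P).orderIsoOfFin hU x : Fin n)))

lemma QP_part (hU : (UP P).card = m) (x : Fin m) :
    (QP hU).part x = univ.filter
      (fun y => P.part ((UP P).orderIsoOfFin hU y : Fin n)
        = P.part ((UP P).orderIsoOfFin hU x : Fin n)) :=
  part_kerPart _ x

lemma mem_UP_of_part (hU : (UP P).card = m) (x : Fin m) :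
    ((UP P).orderIsoOfFin hU x : Fin n) ∈ UP P :=
  ((UP P).orderIsoOfFin hU x).2

lemma card_part_ne_one_of_mem_UP {i : Fin n} (hi : i ∈ UP P) : (P.part i).card ≠ 1 :=
  (mem_filter.1 hi).2

lemma card_QP_part (hU : (UP P).card = m) (x : Fin m) :
    ((QP hU).part x).card = (P.part ((UP P).orderIsoOfFin hU x : Fin n)).card := by
  rw [QP_part]
  apply card_nbij (i := fun y => ((UP P).orderIsoOfFin hU y : Fin n))
  · intro y hy
    simp only [mem_coe] at hy ⊢
    rw [mem_filter] at hy
    rw [← hy.2]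
    exact P.mem_part (mem_univ _)
  · intro y _ y' _ hyy
    exact coe_orderIsoOfFin_injective _ hU hyy
  · intro z hz
    simp only [mem_coe] at hz
    have hpz : P.part z = P.part ((UP P).orderIsoOfFin hU x : Fin n) :=
      P.part_eq_of_mem (P.part_mem.2 (mem_univ _)) hz
    have hzU : z ∈ UP P := by
      rw [UP, mem_filter]
      refine ⟨mem_univ _, ?_⟩
      rw [hpz]
      exact card_part_ne_one_of_mem_UP (mem_UP_of_part hU x)
    refine ⟨((UP P).orderIsoOfFin hU).symm ⟨z, hzU⟩, ?_, ?_⟩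
    · simp only [coe_filter, Set.mem_setOf_eq, mem_univ, true_and]
      rw [OrderIso.apply_symm_apply]
      exact hpz
    · simp only
      rw [OrderIso.apply_symm_apply]

lemma two_le_card_QP_parts (hU : (UP P).card = m) :
    ∀ q ∈ (QP hU).parts, 2 ≤ q.card := by
  intro q hq
  obtain ⟨x, hx⟩ := (QP hU).nonempty_of_mem_parts hq
  rw [← (QP hU).part_eq_of_mem hq hx, card_QP_part]
  have h1 := card_part_ne_one_of_mem_UP (mem_UP_of_part hU x)
  have h2 : 0 < (P.part ((UP P).orderIsoOfFin hU x : Fin n)).card :=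
    card_pos.2 ⟨_, P.mem_part (mem_univ _)⟩
  omega

lemma card_QP_parts (hU : (UP P).card = m) :
    (QP hU).parts.card = (P.parts.filter fun p => p.card ≠ 1).card := by
  rw [show (QP hU) = kerPart
      (fun x : Fin m => P.part (((UP P).orderIsoOfFin hU x : Fin n))) from rfl,
    card_parts_kerPart]
  congr 1
  ext p
  rw [mem_image, mem_filter]
  constructor
  · rintro ⟨x, -, rfl⟩
    exact ⟨P.part_mem.2 (mem_univ _), card_part_ne_one_of_mem_UP (mem_UP_of_part hU x)⟩
  · rintro ⟨hp1, hp2⟩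
    obtain ⟨z, hz⟩ := P.nonempty_of_mem_parts hp1
    have hpz : P.part z = p := P.part_eq_of_mem hp1 hz
    have hzU : z ∈ UP P := by
      rw [UP, mem_filter]
      exact ⟨mem_univ _, by rw [hpz]; exact hp2⟩
    refine ⟨((UP P).orderIsoOfFin hU).symm ⟨z, hzU⟩, mem_univ _, ?_⟩
    show P.part ((UP P).orderIsoOfFin hU (((UP P).orderIsoOfFin hU).symm ⟨z, hzU⟩) : Fin n) = p
    rw [OrderIso.apply_symm_apply]
    exact hpz

end Forward

section Roundtrip

lemma Uc_AP (hn : 1 ≤ n) (P : Finpartition (univ : Finset (Fin n)))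
    (hPL : ({lastF n hn} : Finset (Fin n)) ∈ P.parts) :
    Uc n hn (AP P hn) = UP P := by
  ext i
  rw [mem_Uc_iff_not_mem_spSet, UP, mem_filter]
  simp only [mem_univ, true_and]
  rw [spSet, mem_insert, mem_image]
  have key : (i = lastF n hn ∨ ∃ a ∈ AP P hn, emb n hn a = i) ↔ (P.part i).card = 1 := by
    constructor
    · rintro (rfl | ⟨a, ha, rfl⟩)
      · exact (singleton_mem_parts_iff P _).1 hPL
      · rw [AP, mem_filter] at ha
        exact (singleton_mem_parts_iff P _).1 ha.2
    · intro h1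
      by_cases hiL : i = lastF n hn
      · exact Or.inl hiL
      · right
        have hval : i.val < n - 1 := by
          have h2 := i.isLt
          have h3 : i.val ≠ n - 1 := fun hc => hiL (Fin.ext hc)
          omega
        refine ⟨⟨i.val, hval⟩, ?_, Fin.ext rfl⟩
        rw [AP, mem_filter]
        refine ⟨mem_univ _, ?_⟩
        have hxe : emb n hn ⟨i.val, hval⟩ = i := Fin.ext rfl
        rw [hxe]
        exact (singleton_mem_parts_iff P i).2 h1
  exact not_congr key

lemma Pback_AP_QP (hn : 1 ≤ n) (P : Finpartition (univ : Finset (Fin n)))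
    (hPL : ({lastF n hn} : Finset (Fin n)) ∈ P.parts)
    (hU : (UP P).card = m) (h' : (Uc n hn (AP P hn)).card = m) :
    Pback hn (AP P hn) h' (QP hU) = P := by
  have hUc := Uc_AP hn P hPL
  apply finpartition_eq_of_part_eq
  intro i
  by_cases hi : i ∈ Uc n hn (AP P hn)
  · rw [Pback_part_of_mem hn _ h' _ hi]
    have hiU : i ∈ UP P := by rw [← hUc]; exact hi
    have hcoe : ∀ y : Fin m, ((Uc n hn (AP P hn)).orderIsoOfFin h' y : Fin n)
        = ((UP P).orderIsoOfFin hU y : Fin n) := fun y => orderIsoOfFin_congr hUc h' hU y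
    have hex' : (((Uc n hn (AP P hn)).orderIsoOfFin h')
        (((Uc n hn (AP P hn)).orderIsoOfFin h').symm ⟨i, hi⟩) : Fin n) = i := by
      rw [OrderIso.apply_symm_apply]
    have hex : (((UP P).orderIsoOfFin hU)
        (((Uc n hn (AP P hn)).orderIsoOfFin h').symm ⟨i, hi⟩) : Fin n) = i := by
      rw [← hcoe]; exact hex'
    ext z
    rw [mem_image]
    constructor
    · rintro ⟨y, hy, rfl⟩
      rw [QP_part, mem_filter] at hy
      have h2 : P.part ((Uc n hn (AP P hn)).orderIsoOfFin h' y : Fin n) = P.part i := by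
        rw [hcoe y, hy.2, hex]
      rw [← h2]
      exact P.mem_part (mem_univ _)
    · intro hz
      have hpz : P.part z = P.part i := P.part_eq_of_mem (P.part_mem.2 (mem_univ i)) hz
      have hzU : z ∈ UP P := by
        rw [UP, mem_filter]
        exact ⟨mem_univ _, by rw [hpz]; exact card_part_ne_one_of_mem_UP hiU⟩
      have hzUc : z ∈ Uc n hn (AP P hn) := by rw [hUc]; exact hzU
      refine ⟨((Uc n hn (AP P hn)).orderIsoOfFin h').symm ⟨z, hzUc⟩, ?_, ?_⟩
      · rw [QP_part, mem_filter]
        refine ⟨mem_univ _, ?_⟩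
        have h1 : (((UP P).orderIsoOfFin hU)
            (((Uc n hn (AP P hn)).orderIsoOfFin h').symm ⟨z, hzUc⟩) : Fin n) = z := by
          rw [← hcoe, OrderIso.apply_symm_apply]
        rw [h1, hex, hpz]
      · show (((Uc n hn (AP P hn)).orderIsoOfFin h')
            (((Uc n hn (AP P hn)).orderIsoOfFin h').symm ⟨z, hzUc⟩) : Fin n) = z
        rw [OrderIso.apply_symm_apply]
  · rw [Pback_part_of_not_mem hn _ h' _ hi]
    have hiU : i ∉ UP P := by rw [← hUc]; exact hi
    have h1 : (P.part i).card = 1 := by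
      by_contra hc
      exact hiU (mem_filter.2 ⟨mem_univ _, hc⟩)
    exact ((part_eq_singleton_iff P i).1 h1).symm

lemma AP_Pback' (hn : 1 ≤ n) (A : Finset (Fin (n - 1))) (h : (Uc n hn A).card = m)
    (Q : Finpartition (univ : Finset (Fin m))) (hQ2 : ∀ p ∈ Q.parts, 2 ≤ p.card) :
    AP (Pback hn A h Q) hn = A := AP_Pback hn A h Q hQ2

lemma QP_Pback (hn : 1 ≤ n) (A : Finset (Fin (n - 1))) (h : (Uc n hn A).card = m)
    (Q : Finpartition (univ : Finset (Fin m))) (hQ2 : ∀ p ∈ Q.parts, 2 ≤ p.card)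
    (hU' : (UP (Pback hn A h Q)).card = m) :
    QP hU' = Q := by
  have hUPb : UP (Pback hn A h Q) = Uc n hn A := UP_Pback hn A h Q hQ2
  have hcoe : ∀ y : Fin m, ((UP (Pback hn A h Q)).orderIsoOfFin hU' y : Fin n)
      = ((Uc n hn A).orderIsoOfFin h y : Fin n) := fun y => orderIsoOfFin_congr hUPb hU' h y
  have hpart : ∀ y : Fin m, (Pback hn A h Q).part
      ((UP (Pback hn A h Q)).orderIsoOfFin hU' y : Fin n)
      = (Q.part y).image (fun b => ((Uc n hn A).orderIsoOfFin h b : Fin n)) := by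
    intro y
    have hyU : ((UP (Pback hn A h Q)).orderIsoOfFin hU' y : Fin n) ∈ Uc n hn A := by
      rw [hcoe y]; exact ((Uc n hn A).orderIsoOfFin h y).2
    rw [Pback_part_of_mem hn A h Q hyU]
    have h2 : (⟨((UP (Pback hn A h Q)).orderIsoOfFin hU' y : Fin n), hyU⟩ :
        {z // z ∈ Uc n hn A}) = (Uc n hn A).orderIsoOfFin h y := Subtype.ext (hcoe y)
    rw [h2, OrderIso.symm_apply_apply]
  apply finpartition_eq_of_part_eq
  intro x
  ext z
  rw [QP_part, mem_filter, hpart z, hpart x]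
  constructor
  · rintro ⟨-, h2⟩
    have h3 : Q.part z = Q.part x :=
      Finset.image_injective (coe_orderIsoOfFin_injective _ h) h2
    rw [part_eq_part_iff_aux] at h3
    exact (Q.mem_part_iff_part_eq_part (mem_univ z) (mem_univ x)).2
      ((part_eq_part_iff_aux Q z x).2 h3)
  · intro hz
    exact ⟨mem_univ _, by rw [(part_eq_part_iff_aux Q z x).2 hz]⟩

end Roundtrip

end Main

section GoodCount

variable (n d j : ℕ)

def GoodSub (hn : 1 ≤ n) :=
  {P : Finpartition (univ : Finset (Fin n)) //
    P.parts.card = d ∧ ({lastF n hn} : Finset (Fin n)) ∈ P.parts ∧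
    (P.parts.filter fun p => p.card = 1).card = j}

variable {n d j}

noncomputable def goodEquiv (hn : 1 ≤ n) (hj : 1 ≤ j) (hjd : j ≤ d) :
    GoodSub n d j hn ≃
      ({A : Finset (Fin (n - 1)) // A.card = j - 1} ×
       {Q : Finpartition (univ : Finset (Fin (n - j))) //
         Q.parts.card = d - j ∧ ∀ p ∈ Q.parts, 2 ≤ p.card}) where
  toFun P :=
    (⟨AP P.1 hn, by
        have h1 := card_AP P.1 hn P.2.2.1
        rw [P.2.2.2] at h1
        omega⟩,
     ⟨QP (show (UP P.1).card = n - j by rw [card_UP, P.2.2.2]), by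
        constructor
        · rw [card_QP_parts]
          have h1 := card_filter_add_card_filter_not (s := P.1.parts)
            (p := fun p => p.card = 1)
          rw [P.2.2.2, P.2.1] at h1
          have h2 : (P.1.parts.filter fun p => p.card ≠ 1).card
              = (P.1.parts.filter fun p => ¬ p.card = 1).card := rfl
          omega
        · exact two_le_card_QP_parts _⟩)
  invFun AQ :=
    ⟨Pback hn AQ.1.1 (show (Uc n hn AQ.1.1).card = n - j by
        rw [card_Uc, AQ.1.2]; omega) AQ.2.1, by
      refine ⟨?_, lastF_mem_Pback_parts hn _ _ _, ?_⟩
      · rw [card_Pback_parts hn _ _ _ AQ.2.2.2, AQ.1.2, AQ.2.2.1]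
        omega
      · rw [card_Pback_parts_filter_singleton hn _ _ _ AQ.2.2.2, AQ.1.2]
        omega⟩
  left_inv P := Subtype.ext (Pback_AP_QP hn P.1 P.2.2.1 _ _)
  right_inv AQ := by
    obtain ⟨⟨A, hA⟩, ⟨Q, hQ⟩⟩ := AQ
    refine Prod.ext ?_ ?_
    · exact Subtype.ext (AP_Pback' hn A _ Q hQ.2)
    · exact Subtype.ext (QP_Pback hn A _ Q hQ.2 _)

end GoodCount

def sigmaFiberSubtypeEquiv {α β : Type*} (F : α → β) (Q : β → Prop) :
    (Σ y : Subtype Q, {x // F x = y.1}) ≃ {x // Q (F x)} where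
  toFun y := ⟨y.2.1, by rw [y.2.2]; exact y.1.2⟩
  invFun x := ⟨⟨F x.1, x.2⟩, ⟨x.1, rfl⟩⟩
  left_inv := by
    rintro ⟨⟨y, hy⟩, ⟨x, hx⟩⟩
    change F x = y at hx
    subst hx
    rfl
  right_inv x := rfl

section FnSide

variable {n d : ℕ}

lemma surj_iff (f : Fin n → Fin d) :
    (∀ c : Fin d, ∃ i : Fin n, f i = c) ↔ (kerPart f).parts.card = d := by
  rw [show ((kerPart f).parts.card = d ↔ (kerPart f).parts.card = Fintype.card (Fin d)) by
    rw [Fintype.card_fin], card_parts_kerPart_eq_iff]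
  exact ⟨fun h c => h c, fun h c => h c⟩

lemma lastfresh_iff (hn : 1 ≤ n) (f : Fin n → Fin d)
    (hsurj : ∀ c : Fin d, ∃ i : Fin n, f i = c) :
    (¬ ∀ c : Fin d, ∃ i : Fin n, (i : ℕ) < n - 1 ∧ f i = c) ↔
      ({lastF n hn} : Finset (Fin n)) ∈ (kerPart f).parts := by
  constructor
  · intro hne
    obtain ⟨c, hc⟩ := not_forall.1 hne
    push_neg at hc
    obtain ⟨i₀, hi₀⟩ := hsurj c
    have hL : (lastF n hn : ℕ) = n - 1 := rfl
    have hi₀L : i₀ = lastF n hn := by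
      have h2 := hc i₀
      have h3 : ¬ (i₀ : ℕ) < n - 1 := fun hlt => h2 hlt hi₀
      have h4 := i₀.isLt
      exact Fin.ext (by omega)
    rw [singleton_mem_parts_iff, part_eq_singleton_iff]
    ext b
    rw [mem_part_kerPart, mem_singleton]
    constructor
    · intro hfb
      have hflc : f (lastF n hn) = c := by rw [← hi₀L]; exact hi₀
      have hfbc : f b = c := by rw [← hfb]; exact hflc
      have h2 := hc b
      have h3 : ¬ (b : ℕ) < n - 1 := fun hlt => h2 hlt hfbc
      have h4 := b.isLt
      exact Fin.ext (by omega)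
    · rintro rfl; rfl
  · intro hmem hall
    obtain ⟨i, hilt, hfi⟩ := hall (f (lastF n hn))
    have hpart : (kerPart f).part (lastF n hn) = {lastF n hn} :=
      (part_eq_singleton_iff _ _).1 ((singleton_mem_parts_iff _ _).1 hmem)
    have hi : i ∈ (kerPart f).part (lastF n hn) :=
      (mem_part_kerPart f _ i).2 hfi.symm
    rw [hpart, mem_singleton] at hi
    rw [hi] at hilt
    have hL : (lastF n hn : ℕ) = n - 1 := rfl
    omega

end FnSide


/-- `Sge h n k` is the number of partitions of an `n`-set into exactly `k` blocks,
each block of size at least `h`. -/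
noncomputable def Sge (h n k : ℕ) : ℕ :=
  Nat.card {P : Finpartition (Finset.univ : Finset (Fin n)) //
    P.parts.card = k ∧ ∀ p ∈ P.parts, h ≤ p.card}

/-- The probability that a coupon collector sequence over `d` kinds first becomes complete
at step `n` with exactly `j` singletons (kinds drawn exactly once) is
`f(n,j) = (d!/d^n) C(n-1, j-1) S_{≥2}(n-j, d-j)`. -/
theorem singletons_joint_distribution (d n j : ℕ) (hd : 1 ≤ d) (hn : 1 ≤ n) (hj : 1 ≤ j)
    (hjd : j ≤ d) :
    ((Nat.card {f : Fin n → Fin d //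
        (∀ c : Fin d, ∃ i : Fin n, f i = c) ∧
        ¬ (∀ c : Fin d, ∃ i : Fin n, (i : ℕ) < n - 1 ∧ f i = c) ∧
        (Finset.univ.filter fun c : Fin d =>
          (Finset.univ.filter fun i : Fin n => f i = c).card = 1).card = j} : ℕ) : ℝ)
        / (d : ℝ) ^ n
      = (Nat.factorial d : ℝ) / (d : ℝ) ^ n * (Nat.choose (n - 1) (j - 1) : ℝ) *
          (Sge 2 (n - j) (d - j) : ℝ) := by
  have cond_iff : ∀ f : Fin n → Fin d,
      ((∀ c : Fin d, ∃ i : Fin n, f i = c) ∧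
        (¬ ∀ c : Fin d, ∃ i : Fin n, (i : ℕ) < n - 1 ∧ f i = c) ∧
        (Finset.univ.filter fun c : Fin d =>
          (Finset.univ.filter fun i : Fin n => f i = c).card = 1).card = j)
      ↔ ((fun P : Finpartition (univ : Finset (Fin n)) =>
          P.parts.card = d ∧ ({lastF n hn} : Finset (Fin n)) ∈ P.parts ∧
          (P.parts.filter fun p => p.card = 1).card = j) (kerPart f)) := by
    intro f
    constructor
    · rintro ⟨h1, h2, h3⟩
      exact ⟨(surj_iff f).1 h1, (lastfresh_iff hn f h1).1 h2,
        by rw [← card_singleton_kinds]; exact h3⟩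
    · rintro ⟨h1, h2, h3⟩
      have hs := (surj_iff f).2 h1
      exact ⟨hs, (lastfresh_iff hn f hs).2 h2, by rw [card_singleton_kinds]; exact h3⟩
  have key : Nat.card {f : Fin n → Fin d //
        (∀ c : Fin d, ∃ i : Fin n, f i = c) ∧
        (¬ ∀ c : Fin d, ∃ i : Fin n, (i : ℕ) < n - 1 ∧ f i = c) ∧
        (Finset.univ.filter fun c : Fin d =>
          (Finset.univ.filter fun i : Fin n => f i = c).card = 1).card = j}
      = ((n - 1).choose (j - 1) * Sge 2 (n - j) (d - j)) * d.factorial := by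
    have e1 := Equiv.subtypeEquivRight cond_iff
    have e2 := (sigmaFiberSubtypeEquiv (kerPart (α := Fin n) (γ := Fin d))
      (fun P : Finpartition (univ : Finset (Fin n)) =>
        P.parts.card = d ∧ ({lastF n hn} : Finset (Fin n)) ∈ P.parts ∧
        (P.parts.filter fun p => p.card = 1).card = j)).symm
    have e3 := Equiv.sigmaCongrRight
      (fun P : GoodSub n d j hn =>
        (labelEquiv P.1 (show P.1.parts.card = Fintype.card (Fin d) by
            rw [Fintype.card_fin]; exact P.2.1)).trans
          (Fintype.equivFinOfCardEq (show Fintype.card ({p // p ∈ P.1.parts} ≃ Fin d)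
              = d.factorial by
            have hc : Fintype.card {p // p ∈ P.1.parts} = Fintype.card (Fin d) := by
              rw [Fintype.card_coe, Fintype.card_fin]; exact P.2.1
            rw [Fintype.card_equiv (Fintype.equivOfCardEq hc), Fintype.card_coe, P.2.1])))
    have e4 := Equiv.sigmaEquivProd (GoodSub n d j hn) (Fin d.factorial)
    have e5 := Equiv.prodCongr (goodEquiv hn hj hjd) (Equiv.refl (Fin d.factorial))
    have := Nat.card_congr ((((e1.trans e2).trans e3).trans e4).trans e5)
    rw [this, Nat.card_prod, Nat.card_prod]
    have hA : Nat.card {A : Finset (Fin (n - 1)) // A.card = j - 1}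
        = (n - 1).choose (j - 1) := by
      rw [Nat.card_eq_fintype_card, Fintype.card_finset_len, Fintype.card_fin]
    have hQ : Nat.card {Q : Finpartition (univ : Finset (Fin (n - j))) //
        Q.parts.card = d - j ∧ ∀ p ∈ Q.parts, 2 ≤ p.card} = Sge 2 (n - j) (d - j) := rfl
    rw [hA, hQ, Nat.card_eq_fintype_card, Fintype.card_fin]
  rw [key]
  push_cast
  ring
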